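/- Let Λ be a commutative Noetherian regular local ring and R a commutative Λ-algebra that is free of finite rank as a Λ-module and admits an isomorphism of R-modules Hom_Λ(R, Λ) ≅ R. Let 0 → R^a →α R^{a+l} →β M → 0 be an exact sequence of R-modules and let Ψ : ⋀^l_R M → ⋀^{a+l}_R R^{a+l} be the unique R-linear map with Ψ(β(y₁) ∧ ⋯ ∧ β(y_l)) = α(e₁) ∧ ⋯ ∧ α(e_a) ∧ y₁ ∧ ⋯ ∧ y_l for all y₁, …, y_l ∈ R^{a+l} (e₁, …, e_a the standard basis of R^a). Then the kernel of Ψ equals the torsion submodule of ⋀^l_R M, i.e., the submodule of elements annihilated by some non-zero-divisor of R. -/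

import Mathlib

open Function

section AuxAll
section AssPrime
variable {R : Type*} [CommRing R] {M : Type*} [AddCommGroup M] [Module R M]

lemma F1 {x : M} {p : Ideal R} (hp : p.IsPrime)
    (hx : (R ∙ x).annihilator = p) {r : R} (hr : r • x ≠ 0) :
    (R ∙ r • x).annihilator = p := by
  ext s
  rw [Submodule.mem_annihilator_span_singleton]
  constructor
  · intro h
    have hsr : s * r ∈ p := by
      rw [← hx, Submodule.mem_annihilator_span_singleton, mul_smul]
      exact h
    rcases hp.mem_or_mem hsr with h' | h'
    · exact h'
    · exact absurd (by rw [← hx, Submodule.mem_annihilator_span_singleton] at h'; exact h') hr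
  · intro h
    have : s • x = 0 := by
      rw [← hx, Submodule.mem_annihilator_span_singleton] at h; exact h
    rw [smul_comm, this, smul_zero]

lemma assoc_iff' [IsNoetherianRing R] {p : Ideal R} :
    p ∈ associatedPrimes R M ↔ p.IsPrime ∧ ∃ x : M, p = (R ∙ x).annihilator := by
  rw [AssociatedPrimes.mem_iff, isAssociatedPrime_iff]
  simp only [Submodule.bot_colon']

lemma ass_subset_union [IsNoetherianRing R] (N : Submodule R M) :
    associatedPrimes R M ⊆ associatedPrimes R N ∪ associatedPrimes R (M ⧸ N) := by
  intro p hp0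
  obtain ⟨hp, x, hx⟩ := assoc_iff'.mp hp0
  by_cases h : ∃ r : R, r • x ∈ N ∧ r • x ≠ 0
  · obtain ⟨r, hrN, hr⟩ := h
    left
    refine assoc_iff'.mpr ⟨hp, ⟨r • x, hrN⟩, ?_⟩
    have := F1 hp hx.symm hr
    rw [← this]
    ext s
    rw [Submodule.mem_annihilator_span_singleton, Submodule.mem_annihilator_span_singleton]
    constructor
    · intro hs
      exact Subtype.ext (by simpa using hs)
    · intro hs
      simpa using congrArg Subtype.val hs
  · right
    push_neg at h
    refine assoc_iff'.mpr ⟨hp, Submodule.Quotient.mk x, ?_⟩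
    ext s
    rw [Submodule.mem_annihilator_span_singleton, ← Submodule.Quotient.mk_smul,
      Submodule.Quotient.mk_eq_zero]
    rw [hx, Submodule.mem_annihilator_span_singleton]
    constructor
    · intro hs
      rw [hs]; exact N.zero_mem
    · intro hs
      exact h s hs

lemma ass_span_singleton_subset [IsNoetherianRing R] {x : M} {p : Ideal R} (hp : p.IsPrime)
    (hx : p = (R ∙ x).annihilator) :
    associatedPrimes R (R ∙ x : Submodule R M) ⊆ {p} := by
  intro q hq0
  obtain ⟨hq, z, hz⟩ := assoc_iff'.mp hq0
  obtain ⟨r, hr⟩ := Submodule.mem_span_singleton.mp z.2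
  have hzval : (z : M) = r • x := hr.symm
  have hzne : (z : M) ≠ 0 := by
    intro h0
    have : z = 0 := Subtype.ext h0
    rw [this] at hz
    rw [Submodule.span_singleton_eq_bot.mpr rfl, Submodule.annihilator_bot] at hz
    exact hq.ne_top hz
  have : (R ∙ (z : M)).annihilator = p := by
    rw [hzval]
    exact F1 hp hx.symm (hzval ▸ hzne)
  have hq' : q = (R ∙ (z : M)).annihilator := by
    rw [hz]
    ext s
    rw [Submodule.mem_annihilator_span_singleton, Submodule.mem_annihilator_span_singleton]
    exact ⟨fun hs => by simpa using congrArg Subtype.val hs, fun hs => Subtype.ext (by simpa using hs)⟩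
  simp only [Set.mem_singleton_iff]
  rw [hq', this]

end AssPrime

section AssFinite
variable {R : Type*} [CommRing R] {M : Type*} [AddCommGroup M] [Module R M]

lemma ass_finite_quot [IsNoetherianRing R] [IsNoetherian R M] (N : Submodule R M) :
    (associatedPrimes R (M ⧸ N)).Finite := by
  have wf : WellFounded ((· > ·) : Submodule R M → Submodule R M → Prop) :=
    (wellFoundedGT (R := R) (M := M)).wf
  refine wf.induction (C := fun N => (associatedPrimes R (M ⧸ N)).Finite) N ?_
  intro N IH
  by_cases hA : associatedPrimes R (M ⧸ N) = ∅
  · rw [hA]; exact Set.finite_empty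
  obtain ⟨p, hp⟩ := Set.nonempty_iff_ne_empty.mpr hA
  obtain ⟨hpPrime, xb, hxb⟩ := assoc_iff'.mp hp
  obtain ⟨x, rfl⟩ := N.mkQ_surjective xb
  set K : Submodule R (M ⧸ N) := R ∙ (N.mkQ x) with hK
  set N' : Submodule R M := K.comap N.mkQ with hN'
  have hle : N ≤ N' := by
    rw [← Submodule.ker_mkQ N]
    exact Submodule.comap_mono bot_le
  have hlt : N < N' := by
    refine lt_of_le_of_ne hle fun h => ?_
    have hxN' : x ∈ N' := by
      rw [hN']
      exact Submodule.mem_span_singleton_self _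
    rw [← h] at hxN'
    have : N.mkQ x = 0 := (Submodule.Quotient.mk_eq_zero N).mpr hxN'
    rw [hK, this, Submodule.span_singleton_eq_bot.mpr rfl, Submodule.annihilator_bot] at hxb
    exact hpPrime.ne_top hxb
  have hmapK : N'.map N.mkQ = K := by
    rw [hN', Submodule.map_comap_eq, Submodule.range_mkQ, top_inf_eq]
  have hsub := ass_subset_union (M := M ⧸ N) K
  have h1 : associatedPrimes R K ⊆ {p} := ass_span_singleton_subset hpPrime hxb
  have h2 : (associatedPrimes R ((M ⧸ N) ⧸ K)).Finite := by
    rw [← hmapK]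
    rw [LinearEquiv.AssociatedPrimes.eq (Submodule.quotientQuotientEquivQuotient N N' hle)]
    exact IH N' hlt
  exact Set.Finite.subset ((Set.finite_singleton p).union h2)
    (hsub.trans (Set.union_subset_union_left _ h1))

lemma ass_finite (R M : Type*) [CommRing R] [IsNoetherianRing R] [AddCommGroup M] [Module R M]
    [IsNoetherian R M] : (associatedPrimes R M).Finite := by
  have h := ass_finite_quot (R := R) (M := M) ⊥
  rwa [LinearEquiv.AssociatedPrimes.eq (Submodule.quotEquivOfEqBot ⊥ rfl)] at h

end AssFinite

open Matrix

section McCoy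
variable {R : Type*} [CommRing R]

lemma mccoy {m n : ℕ} (A : Matrix (Fin m) (Fin n) R)
    (hinj : Function.Injective A.mulVec) (c : R)
    (hc : ∀ f : Fin n → Fin m, Function.Injective f → c * (A.submatrix f id).det = 0) :
    c = 0 := by
  classical
  by_contra hc0
  set P : ℕ → Prop := fun r => ∃ f : Fin r → Fin m, ∃ g : Fin r → Fin n,
    Function.Injective f ∧ Function.Injective g ∧ c * (A.submatrix f g).det ≠ 0 with hP
  have hP0 : P 0 := by
    refine ⟨Fin.elim0, Fin.elim0, fun x => x.elim0, fun x => x.elim0, ?_⟩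
    rw [det_fin_zero, mul_one]
    exact hc0
  have hPbound : ∀ k, P k → k ≤ n := by
    rintro k ⟨f, g, hf, hg, hne⟩
    simpa using Fintype.card_le_of_injective g hg
  set r : ℕ := Nat.findGreatest P n with hr
  have hPr : P r := Nat.findGreatest_spec (Nat.zero_le n) hP0
  have hmax : ∀ k, r < k → k ≤ n → ¬ P k := fun k hk hk' => Nat.findGreatest_is_greatest hk hk'
  have hrn : r ≤ n := Nat.findGreatest_le n
  clear_value r
  clear hr
  obtain ⟨f, g, hf, hg, hne⟩ := hPr
  rcases eq_or_lt_of_le hrn with hreq | hrlt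
  · -- r = n : g is a permutation, contradiction with hc
    subst hreq
    have hgbij : Function.Bijective g := (Finite.injective_iff_bijective).mp hg
    set σ : Equiv.Perm (Fin r) := Equiv.ofBijective g hgbij with hσ
    have : A.submatrix f g = (A.submatrix f id).submatrix id σ := by
      ext i j
      simp [hσ, Equiv.ofBijective_apply]
    rw [this, det_permute'] at hne
    apply hne
    rw [← mul_assoc, mul_comm c _, mul_assoc, hc f hf, mul_zero]
  · -- r < n
    have hgns : ¬ Function.Surjective g := by
      intro hs
      have := Fintype.card_le_of_surjective g hs
      simp at this
      omega
    obtain ⟨j0, hj0⟩ : ∃ j0 : Fin n, ∀ i, g i ≠ j0 := by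
      rw [Function.Surjective] at hgns
      push_neg at hgns
      obtain ⟨j0, hj0⟩ := hgns
      exact ⟨j0, fun i h => hj0 i h⟩
    set g' : Fin (r + 1) → Fin n := Fin.snoc g j0 with hg'def
    have hg'cast : ∀ i : Fin r, g' i.castSucc = g i := fun i => Fin.snoc_castSucc ..
    have hg'last : g' (Fin.last r) = j0 := Fin.snoc_last ..
    have hg' : Function.Injective g' := by
      intro i j hij
      induction i using Fin.lastCases with
      | last =>
        induction j using Fin.lastCases with
        | last => rfl
        | cast j =>
          rw [hg'last, hg'cast] at hij
          exact absurd hij.symm (hj0 j)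
      | cast i =>
        induction j using Fin.lastCases with
        | last =>
          rw [hg'last, hg'cast] at hij
          exact absurd hij (hj0 i)
        | cast j =>
          rw [hg'cast, hg'cast] at hij
          exact congrArg Fin.castSucc (hg hij)
    set Nj : Fin (r + 1) → Matrix (Fin r) (Fin r) R :=
      fun j => A.submatrix f (g' ∘ j.succAbove) with hNj
    set v : Fin n → R :=
      ∑ j : Fin (r + 1), ((-1 : R) ^ (r + (j : ℕ)) * (c * (Nj j).det)) • (Pi.single (g' j) (1 : R) : Fin n → R)
      with hv
    have hvlast : v (g' (Fin.last r)) = c * (A.submatrix f g).det := by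
      rw [hv, Finset.sum_apply]
      rw [Finset.sum_eq_single (Fin.last r)]
      · have : Nj (Fin.last r) = A.submatrix f g := by
          funext p q
          simp only [hNj, Matrix.submatrix_apply, Function.comp_apply, Fin.succAbove_last,
            hg'cast]
        rw [this]
        simp only [Pi.smul_apply, Pi.single_eq_same, smul_eq_mul, mul_one, Fin.val_last]
        rw [← two_mul, pow_mul]
        norm_num
      · intro j _ hj
        simp only [Pi.smul_apply, smul_eq_mul]
        rw [Pi.single_apply, if_neg (fun h => hj (hg' h.symm)), mul_zero]
      · intro h
        exact absurd (Finset.mem_univ _) h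
    have hvne : v ≠ 0 := by
      intro h0
      rw [h0] at hvlast
      exact hne hvlast.symm
    have hAv : A.mulVec v = 0 := by
      funext i
      rw [Pi.zero_apply]
      have expand : A.mulVec v i
          = ∑ j : Fin (r + 1), (-1 : R) ^ (r + (j : ℕ)) * (c * (Nj j).det) * A i (g' j) := by
        rw [hv]
        rw [← Matrix.mulVecLin_apply, map_sum]
        rw [Finset.sum_apply]
        refine Finset.sum_congr rfl fun j _ => ?_
        rw [LinearMap.map_smul, Matrix.mulVecLin_apply, Matrix.mulVec_single]
        simp
      set Mi : Matrix (Fin (r + 1)) (Fin (r + 1)) R := A.submatrix (Fin.snoc f i) g' with hMi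
      have hdet : c * Mi.det = A.mulVec v i := by
        rw [expand, det_succ_row Mi (Fin.last r), Finset.mul_sum]
        refine Finset.sum_congr rfl fun j _ => ?_
        have h1 : Mi (Fin.last r) j = A i (g' j) := by
          rw [hMi, Matrix.submatrix_apply, Fin.snoc_last]
        have h2 : Mi.submatrix (Fin.last r).succAbove j.succAbove = Nj j := by
          funext p q
          simp only [hMi, hNj, Matrix.submatrix_apply, Function.comp_apply, Fin.succAbove_last,
            Fin.snoc_castSucc]
        rw [h1, h2, Fin.val_last]
        ring
      have hzero : c * Mi.det = 0 := by
        by_cases hif : ∃ i0 : Fin r, f i0 = i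
        · obtain ⟨i0, hi0⟩ := hif
          have : Mi.det = 0 := by
            apply Matrix.det_zero_of_row_eq (i := i0.castSucc) (j := Fin.last r)
            · exact (Fin.castSucc_lt_last i0).ne
            · funext j
              rw [hMi, Matrix.submatrix_apply, Matrix.submatrix_apply, Fin.snoc_castSucc,
                Fin.snoc_last, hi0]
          rw [this, mul_zero]
        · push_neg at hif
          by_contra hne'
          refine hmax (r + 1) (Nat.lt_succ_self r) hrlt ⟨Fin.snoc f i, g', ?_, hg', hne'⟩
          intro x y hxy
          induction x using Fin.lastCases with
          | last =>
            induction y using Fin.lastCases with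
            | last => rfl
            | cast y =>
              rw [Fin.snoc_last, Fin.snoc_castSucc] at hxy
              exact absurd hxy.symm (hif y)
          | cast x =>
            induction y using Fin.lastCases with
            | last =>
              rw [Fin.snoc_last, Fin.snoc_castSucc] at hxy
              exact absurd hxy (hif x)
            | cast y =>
              rw [Fin.snoc_castSucc, Fin.snoc_castSucc] at hxy
              exact congrArg Fin.castSucc (hf hxy)
      rw [← hdet, hzero]
    have := hinj (hAv.trans (Matrix.mulVec_zero A).symm)
    exact hvne this

end McCoy

section NZD
variable {R : Type*} [CommRing R]

lemma exists_nzd_minor {m n : ℕ} [IsNoetherianRing R] [Nontrivial R]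
    (A : Matrix (Fin m) (Fin n) R) (hinj : Function.Injective A.mulVec) :
    ∃ d ∈ Ideal.span {x : R | ∃ f : Fin n → Fin m,
        Function.Injective f ∧ x = (A.submatrix f id).det},
      d ∈ nonZeroDivisors R := by
  classical
  set s : Set R := {x : R | ∃ f : Fin n → Fin m,
      Function.Injective f ∧ x = (A.submatrix f id).det} with hs
  by_contra hcon
  push_neg at hcon
  have hsub : (Ideal.span s : Set R) ⊆ ⋃ p ∈ associatedPrimes R R, (p : Set R) := by
    intro d hd
    rw [biUnion_associatedPrimes_eq_zero_divisors]
    have := hcon d hd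
    rw [mem_nonZeroDivisors_iff_right] at this
    push_neg at this
    obtain ⟨x, hx0, hxne⟩ := this
    exact ⟨x, hxne, by rw [smul_eq_mul, mul_comm]; exact hx0⟩
  have hfin : (associatedPrimes R R).Finite := ass_finite R R
  have hsub' : (Ideal.span s : Set R) ⊆ ⋃ p ∈ (hfin.toFinset : Set (Ideal R)), (p : Set R) := by
    intro d hd
    have := hsub hd
    simp only [Set.mem_iUnion] at this ⊢
    obtain ⟨p, hp, hdp⟩ := this
    exact ⟨p, hfin.mem_toFinset.mpr hp, hdp⟩
  rw [Ideal.subset_union_prime ⊥ ⊥ (fun p hp _ _ => (hfin.mem_toFinset.mp hp).1)] at hsub'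
  obtain ⟨p, hpmem, hIp⟩ := hsub'
  obtain ⟨hpPrime, x, hx⟩ := assoc_iff'.mp (hfin.mem_toFinset.mp hpmem)
  have hxne : x ≠ 0 := by
    rintro rfl
    rw [Submodule.span_zero_singleton, Submodule.annihilator_bot] at hx
    exact hpPrime.ne_top hx
  refine hxne (mccoy A hinj x fun f hf => ?_)
  have hmem : (A.submatrix f id).det ∈ p := hIp (Ideal.subset_span ⟨f, hf, rfl⟩)
  rw [hx, Submodule.mem_annihilator_span_singleton, smul_eq_mul] at hmem
  rw [mul_comm]
  exact hmem

lemma single_proj {m n : ℕ} (A : Matrix (Fin m) (Fin n) R) (f : Fin n → Fin m) (x : Fin n → R) :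
    (Matrix.toLin' ((A.submatrix f id).adjugate *
      Matrix.of (fun (i : Fin n) (j : Fin m) => if f i = j then (1 : R) else 0)))
        (A.mulVec x) = (A.submatrix f id).det • x := by
  classical
  rw [Matrix.toLin'_apply, Matrix.mulVec_mulVec, Matrix.mul_assoc]
  have hPA : Matrix.of (fun (i : Fin n) (j : Fin m) => if f i = j then (1 : R) else 0) * A
      = A.submatrix f id := by
    funext i c
    simp only [Matrix.mul_apply, Matrix.of_apply, Matrix.submatrix_apply, id_eq, ite_mul, one_mul,
      zero_mul]
    rw [Finset.sum_ite_eq (Finset.univ) (f i) (fun j => A j c)]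
    simp
  rw [hPA, Matrix.adjugate_mul, Matrix.smul_mulVec, Matrix.one_mulVec]

lemma exists_pi {m n : ℕ} [IsNoetherianRing R] [Nontrivial R]
    (A : Matrix (Fin m) (Fin n) R) (hinj : Function.Injective A.mulVec) :
    ∃ d ∈ nonZeroDivisors R, ∃ π : (Fin m → R) →ₗ[R] (Fin n → R),
      ∀ x, π (A.mulVec x) = d • x := by
  classical
  obtain ⟨d, hdI, hd⟩ := exists_nzd_minor A hinj
  obtain ⟨cf, hsupp, hsum⟩ := Submodule.mem_span_set.mp hdI
  refine ⟨d, hd, ?_⟩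
  choose F hFinj hFdet using fun (y : R) (hy : y ∈ {x : R | ∃ f : Fin n → Fin m,
      Function.Injective f ∧ x = (A.submatrix f id).det}) => hy
  refine ⟨∑ y ∈ cf.support.attach, cf y.1 •
      Matrix.toLin' ((A.submatrix (F y.1 (hsupp y.2)) id).adjugate *
        Matrix.of (fun (i : Fin n) (j : Fin m) => if F y.1 (hsupp y.2) i = j then (1 : R) else 0)),
    fun x => ?_⟩
  rw [LinearMap.sum_apply]
  have : ∀ y ∈ cf.support.attach, (cf y.1 • Matrix.toLin' ((A.submatrix (F y.1 (hsupp y.2)) id).adjugate *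
        Matrix.of (fun (i : Fin n) (j : Fin m) => if F y.1 (hsupp y.2) i = j then (1 : R) else 0)))
        (A.mulVec x) = (cf y.1 * y.1) • x := by
    intro y _
    rw [LinearMap.smul_apply, single_proj, ← hFdet y.1 (hsupp y.2), smul_smul]
  rw [Finset.sum_congr rfl this, ← Finset.sum_smul]
  congr 1
  rw [← hsum, Finsupp.sum]
  rw [← Finset.sum_attach cf.support (fun y => cf y • y)]
  rfl

end NZD

section Contract
variable {R : Type*} [CommRing R] {N : Type*} [AddCommGroup N] [Module R N]

open ExteriorAlgebra

/-- Iterated left contraction by a family of dual vectors. -/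
noncomputable def chainC : ∀ {k : ℕ}, (Fin k → Module.Dual R N) →
    (ExteriorAlgebra R N →ₗ[R] ExteriorAlgebra R N)
  | 0, _ => LinearMap.id
  | (_ + 1), p => (chainC (p ∘ Fin.succ)) ∘ₗ (CliffordAlgebra.contractLeft (p 0))

lemma chainC_zero (p : Fin 0 → Module.Dual R N) :
    chainC p = (LinearMap.id : ExteriorAlgebra R N →ₗ[R] ExteriorAlgebra R N) := rfl

lemma chainC_succ {k : ℕ} (p : Fin (k + 1) → Module.Dual R N) (x : ExteriorAlgebra R N) :
    chainC p x = chainC (p ∘ Fin.succ) (CliffordAlgebra.contractLeft (p 0) x) := rfl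

lemma chainC_mul_mem : ∀ (k : ℕ) (p : Fin k → Module.Dual R N) (x : N),
    (∀ i, p i x = 0) → ∀ z : ExteriorAlgebra R N,
    chainC p (ExteriorAlgebra.ι R x * z) ∈
      LinearMap.range (LinearMap.mulLeft R (ExteriorAlgebra.ι R x))
  | 0, _, x, _, z => ⟨z, rfl⟩
  | (k + 1), p, x, hx, z => by
    rw [chainC_succ, CliffordAlgebra.contractLeft_ι_mul, hx 0, zero_smul, zero_sub, map_neg]
    obtain ⟨w, hw⟩ := chainC_mul_mem k (p ∘ Fin.succ) x (fun i => hx i.succ)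
      (CliffordAlgebra.contractLeft (p 0) z)
    exact ⟨-w, by rw [map_neg, hw]⟩

lemma chainC_prod (k : ℕ) (p : Fin k → Module.Dual R N) (v : Fin k → N) (d : R)
    (hpv : ∀ i j, p i (v j) = if i = j then d else 0) (w : ExteriorAlgebra R N) :
    chainC p ((List.ofFn fun i => ExteriorAlgebra.ι R (v i)).prod * w) - d ^ k • w ∈
      ⨆ j, LinearMap.range (LinearMap.mulLeft R (ExteriorAlgebra.ι R (v j))) := by
  induction k with
  | zero =>
    have h1 : (List.ofFn fun i : Fin 0 => ExteriorAlgebra.ι R (v i)).prod = 1 := by simp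
    rw [h1, one_mul, pow_zero, one_smul, chainC_zero, LinearMap.id_apply, sub_self]
    exact Submodule.zero_mem _
  | succ k IH =>
    have hJS : (⨆ j : Fin k, LinearMap.range
          (LinearMap.mulLeft R (ExteriorAlgebra.ι R (v j.succ)))) ≤
        ⨆ j : Fin (k + 1), LinearMap.range (LinearMap.mulLeft R (ExteriorAlgebra.ι R (v j))) :=
      iSup_le fun j => le_iSup (fun j => LinearMap.range
        (LinearMap.mulLeft R (ExteriorAlgebra.ι R (v j)))) j.succ
    have hsplit : (List.ofFn fun i : Fin (k + 1) => ExteriorAlgebra.ι R (v i)).prod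
        = ExteriorAlgebra.ι R (v 0) *
          (List.ofFn fun i : Fin k => ExteriorAlgebra.ι R (v i.succ)).prod := by
      rw [List.ofFn_succ, List.prod_cons]
    set P := (List.ofFn fun i : Fin k => ExteriorAlgebra.ι R (v i.succ)).prod with hP
    have e1 : chainC p ((List.ofFn fun i : Fin (k + 1) => ExteriorAlgebra.ι R (v i)).prod * w)
        = d • chainC (p ∘ Fin.succ) (P * w)
          - chainC (p ∘ Fin.succ)
              (ExteriorAlgebra.ι R (v 0) * (CliffordAlgebra.contractLeft (p 0) (P * w))) := by
      rw [hsplit, chainC_succ, mul_assoc, CliffordAlgebra.contractLeft_ι_mul]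
      have h00 : p 0 (v 0) = d := by rw [hpv 0 0, if_pos rfl]
      rw [h00, map_sub, LinearMap.map_smul]
    have e2 : chainC p ((List.ofFn fun i : Fin (k + 1) => ExteriorAlgebra.ι R (v i)).prod * w)
        - d ^ (k + 1) • w
        = d • (chainC (p ∘ Fin.succ) (P * w) - d ^ k • w)
          - chainC (p ∘ Fin.succ)
              (ExteriorAlgebra.ι R (v 0) * (CliffordAlgebra.contractLeft (p 0) (P * w))) := by
      rw [e1, smul_sub, smul_smul, ← pow_succ']
      abel
    rw [e2]
    apply Submodule.sub_mem
    · apply Submodule.smul_mem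
      apply hJS
      exact IH (p ∘ Fin.succ) (v ∘ Fin.succ) fun i j => by
        rw [Function.comp_apply, Function.comp_apply, hpv i.succ j.succ]
        by_cases h : i = j
        · rw [if_pos h, if_pos (by rw [h])]
        · rw [if_neg h, if_neg (fun hc => h (Fin.succ_injective _ hc))]
    · have hx0 : ∀ i : Fin k, (p ∘ Fin.succ) i (v 0) = 0 := fun i => by
        rw [Function.comp_apply, hpv i.succ 0, if_neg (Fin.succ_ne_zero i)]
      have := chainC_mul_mem k (p ∘ Fin.succ) (v 0) hx0
        (CliffordAlgebra.contractLeft (p 0) (P * w))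
      exact le_iSup (fun j => LinearMap.range
        (LinearMap.mulLeft R (ExteriorAlgebra.ι R (v j)))) 0 this
end Contract

section TopPower
variable {R : Type*} [CommRing R] {nn : ℕ}

open ExteriorAlgebra

/-- The determinant functional on `⋀^n (R^n)` (defined on the whole exterior algebra). -/
noncomputable def detF (R : Type*) [CommRing R] (nn : ℕ) :
    ExteriorAlgebra R (Fin nn → R) →ₗ[R] R :=
  ExteriorAlgebra.liftAlternating
    (Function.update (fun i => (0 : (Fin nn → R) [⋀^Fin i]→ₗ[R] R)) nn Matrix.detRowAlternating)

lemma detF_ιMulti (v : Fin nn → (Fin nn → R)) :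
    detF R nn (ιMulti R nn v) = (Matrix.of v).det := by
  rw [detF, liftAlternating_apply_ιMulti, Function.update_self]
  rfl

/-- standard basis vectors of `R^n` -/
def bas (R : Type*) [CommRing R] (nn : ℕ) : Fin nn → (Fin nn → R) :=
  fun i j => if i = j then 1 else 0

lemma ιMulti_mem_span_single (v : Fin nn → (Fin nn → R)) :
    ιMulti R nn v ∈ Submodule.span R {ιMulti R nn (bas R nn)} := by
  classical
  have hv : v = fun i => ∑ j : Fin nn, v i j • bas R nn j := by
    funext i
    exact pi_eq_sum_univ (v i)
  have key : ιMulti R nn v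
      = ∑ r : Fin nn → Fin nn, (ιMulti R nn) fun i => v i (r i) • bas R nn (r i) := by
    conv_lhs => rw [hv]
    exact (ιMulti R nn).toMultilinearMap.map_sum (g := fun i j => v i j • bas R nn j)
  rw [key]
  apply Submodule.sum_mem
  intro r _
  have hsmul : (ιMulti R nn) (fun i => v i (r i) • bas R nn (r i))
      = (∏ i : Fin nn, v i (r i)) • (ιMulti R nn) (bas R nn ∘ r) :=
    (ιMulti R nn).toMultilinearMap.map_smul_univ (fun i => v i (r i)) (bas R nn ∘ r)
  rw [hsmul]
  apply Submodule.smul_mem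
  by_cases hr : Function.Injective r
  · have hbij : Function.Bijective r := Finite.injective_iff_bijective.mp hr
    set σ : Equiv.Perm (Fin nn) := Equiv.ofBijective r hbij with hσ
    have : (ιMulti R nn) (bas R nn ∘ r) = Equiv.Perm.sign σ • (ιMulti R nn) (bas R nn) := by
      have := (ιMulti R nn).map_perm (bas R nn) σ
      rw [← this]
      congr 1
    rw [this]
    have hEmem : (ιMulti R nn) (bas R nn) ∈ Submodule.span R {ιMulti R nn (bas R nn)} :=
      Submodule.mem_span_singleton_self _
    rcases Int.units_eq_one_or (Equiv.Perm.sign σ) with h | h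
    · rw [h]; simpa using hEmem
    · rw [h]
      simpa using Submodule.neg_mem _ hEmem
  · have hr' : ¬Function.Injective (bas R nn ∘ r) := by
      rw [Function.Injective] at hr
      push_neg at hr
      obtain ⟨i, j, hij, hne⟩ := hr
      intro hinj
      exact hne (hinj (by simp only [Function.comp_apply, hij]))
    rw [AlternatingMap.map_eq_zero_of_not_injective _ (bas R nn ∘ r) hr']
    exact Submodule.zero_mem _

lemma top_power_torsion_free (y : ⋀[R]^nn (Fin nn → R)) (r : R) (hr : r ∈ nonZeroDivisors R)
    (h : r • y = 0) : y = 0 := by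
  have hyval : (y : ExteriorAlgebra R (Fin nn → R)) ∈
      Submodule.span R (Set.range (ιMulti R nn)) := by
    rw [ιMulti_span_fixedDegree]
    exact y.2
  have hyE : (y : ExteriorAlgebra R (Fin nn → R)) ∈
      Submodule.span R {ιMulti R nn (bas R nn)} := by
    refine Submodule.span_le.mpr ?_ hyval
    rintro _ ⟨v, rfl⟩
    exact ιMulti_mem_span_single v
  obtain ⟨c, hc⟩ := Submodule.mem_span_singleton.mp hyE
  have hval0 : r • (y : ExteriorAlgebra R (Fin nn → R)) = 0 := by
    have := congrArg (Subtype.val) h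
    simpa using this
  rw [← hc, smul_smul] at hval0
  have hdet : detF R nn ((r * c) • ιMulti R nn (bas R nn)) = 0 := by rw [hval0]; simp
  rw [LinearMap.map_smul, detF_ιMulti] at hdet
  have hbas1 : (Matrix.of (bas R nn)) = (1 : Matrix (Fin nn) (Fin nn) R) := by
    funext i j
    simp [bas, Matrix.one_apply]
  rw [hbas1, Matrix.det_one, smul_eq_mul, mul_one] at hdet
  have hc0 : c = 0 := by
    have := mem_nonZeroDivisors_iff_right.mp hr c (by rw [mul_comm] at hdet; exact hdet)
    exact this
  apply Subtype.ext
  rw [← hc, hc0, zero_smul]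
  rfl

end TopPower

end AuxAll

open ExteriorAlgebra Matrix

set_option maxHeartbeats 1600000

/-- A commutative Noetherian local ring is regular if its maximal ideal can be generated by
(Krull dimension of the ring) many elements. -/
def IsRegularLocal (A : Type*) [CommRing A] [IsLocalRing A] : Prop :=
  ∃ s : Finset A, Ideal.span (s : Set A) = IsLocalRing.maximalIdeal A ∧
    (s.card : WithBot ℕ∞) = ringKrullDim A

/-- The wedge product of `n` elements of `M`, as an element of the `n`-th exterior power
`⋀[R]^n M`. -/
noncomputable def wedge (R : Type*) [CommRing R] {M : Type*} [AddCommGroup M] [Module R M]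
    (n : ℕ) (v : Fin n → M) : ⋀[R]^n M :=
  ⟨ExteriorAlgebra.ιMulti R n v, ExteriorAlgebra.ιMulti_range R n (Set.mem_range_self v)⟩

/-- In the Gorenstein setting, the kernel of the canonical map
`Ψ : ⋀^l M → ⋀^{a+l} R^{a+l}` is exactly the torsion submodule of `⋀^l M`. -/
theorem ker_wedge_lift_eq_torsion
    (Λ : Type*) [CommRing Λ] [IsLocalRing Λ] [IsNoetherianRing Λ] (hΛ : IsRegularLocal Λ)
    (R : Type*) [CommRing R] [Algebra Λ R] [Module.Free Λ R] [Module.Finite Λ R]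
    (hGor : ∃ φ : R ≃ₗ[Λ] (R →ₗ[Λ] Λ), ∀ r s x : R, φ (r * s) x = φ s (r * x))
    (a l : ℕ) (M : Type*) [AddCommGroup M] [Module R M]
    (α : (Fin a → R) →ₗ[R] (Fin (a + l) → R)) (β : (Fin (a + l) → R) →ₗ[R] M)
    (hα : Function.Injective α) (hαβ : Function.Exact α β) (hβ : Function.Surjective β)
    (Ψ : (⋀[R]^l M) →ₗ[R] (⋀[R]^(a + l) (Fin (a + l) → R)))
    (hΨ : ∀ y : Fin l → (Fin (a + l) → R),
      Ψ (wedge R l (fun i => β (y i))) =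
        wedge R (a + l) (Fin.append (fun i : Fin a => α (Pi.single i 1)) y)) :
    LinearMap.ker Ψ = Submodule.torsion R (⋀[R]^l M) := by
  classical
  haveI : IsNoetherianRing R := Algebra.FiniteType.isNoetherianRing Λ R
  rcases subsingleton_or_nontrivial R with hR | hR
  · haveI : Subsingleton (ExteriorAlgebra R M) := Module.subsingleton R _
    haveI : Subsingleton (⋀[R]^l M : Type _) := by
      constructor; intro x y; exact Subtype.ext (Subsingleton.elim _ _)
    exact Subsingleton.elim _ _
  -- the matrix of α and the quasi-splitting π
  set A : Matrix (Fin (a + l)) (Fin a) R := LinearMap.toMatrix' α with hA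
  have hmul : ∀ x, A.mulVec x = α x := by
    intro x
    rw [← Matrix.toLin'_apply, hA, Matrix.toLin'_toMatrix']
  have hinj : Function.Injective A.mulVec := by
    have : A.mulVec = α := funext hmul
    rw [this]; exact hα
  obtain ⟨d, hd, π, hπ⟩ := exists_pi A hinj
  have hπ' : ∀ x, π (α x) = d • x := fun x => by rw [← hmul]; exact hπ x
  -- contraction data
  set u : Fin a → (Fin (a + l) → R) := fun i => α (Pi.single i 1) with hu
  set πs : Fin a → Module.Dual R (Fin (a + l) → R) :=
    fun i => (LinearMap.proj i) ∘ₗ π with hπs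
  have hpv : ∀ i j, πs i (u j) = if i = j then d else 0 := by
    intro i j
    rw [hπs, hu]
    simp only [LinearMap.coe_comp, Function.comp_apply, LinearMap.proj_apply]
    rw [hπ' (Pi.single j 1)]
    simp only [Pi.smul_apply, smul_eq_mul, Pi.single_apply]
    split <;> simp
  set Θ : ExteriorAlgebra R (Fin (a + l) → R) →ₗ[R] ExteriorAlgebra R M :=
    (ExteriorAlgebra.map β).toLinearMap ∘ₗ chainC πs with hΘ
  -- the J-submodule is killed by map β
  have hkill : (⨆ j, LinearMap.range (LinearMap.mulLeft R (ExteriorAlgebra.ι R (u j)))) ≤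
      LinearMap.ker (ExteriorAlgebra.map β).toLinearMap := by
    refine iSup_le fun j => ?_
    rintro _ ⟨z, rfl⟩
    rw [LinearMap.mem_ker]
    simp only [LinearMap.mulLeft_apply, AlgHom.toLinearMap_apply]
    rw [_root_.map_mul, ExteriorAlgebra.map_apply_ι]
    have : β (u j) = 0 := by rw [hu]; exact hαβ.apply_apply_eq_zero _
    rw [this, map_zero, zero_mul]
  -- the two linear maps agree
  set F : (⋀[R]^l M) →ₗ[R] ExteriorAlgebra R M :=
    Θ ∘ₗ (Submodule.subtype _) ∘ₗ Ψ with hF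
  set G : (⋀[R]^l M) →ₗ[R] ExteriorAlgebra R M :=
    (d ^ a) • (Submodule.subtype (⋀[R]^l M)) with hG
  have hspan : Submodule.span R (Set.range (fun v : Fin l → M => wedge R l v)) = ⊤ := by
    apply Submodule.map_injective_of_injective (Submodule.injective_subtype (⋀[R]^l M))
    rw [Submodule.map_span, Submodule.map_top, Submodule.range_subtype]
    have himg : (Submodule.subtype (⋀[R]^l M)) '' Set.range (fun v : Fin l → M => wedge R l v)
        = Set.range (ιMulti R l (M := M)) := by
      rw [← Set.range_comp]
      rfl
    rw [himg, ιMulti_span_fixedDegree]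
  have hFG : F = G := by
    apply LinearMap.ext_on hspan
    rintro _ ⟨y0, rfl⟩
    choose y hy using fun i => hβ (y0 i)
    have hy0 : y0 = fun i => β (y i) := funext fun i => (hy i).symm
    rw [hy0]
    have hval : ((wedge R (a + l) (Fin.append u y) : ⋀[R]^(a+l) (Fin (a+l) → R)) :
        ExteriorAlgebra R (Fin (a + l) → R))
        = (List.ofFn fun i : Fin a => ExteriorAlgebra.ι R (u i)).prod *
          (List.ofFn fun i : Fin l => ExteriorAlgebra.ι R (y i)).prod := by
      show ExteriorAlgebra.ιMulti R (a + l) (Fin.append u y) = _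
      rw [ExteriorAlgebra.ιMulti_apply]
      have : (fun i => ExteriorAlgebra.ι R (Fin.append u y i))
          = Fin.append (fun i => ExteriorAlgebra.ι R (u i))
              (fun i => ExteriorAlgebra.ι R (y i)) := by
        funext i
        induction i using Fin.addCases with
        | left i => rw [Fin.append_left, Fin.append_left]
        | right i => rw [Fin.append_right, Fin.append_right]
      rw [this, List.ofFn_fin_append, List.prod_append]
    have hFval : F (wedge R l (fun i => β (y i)))
        = Θ ((wedge R (a + l) (Fin.append u y) : ⋀[R]^(a+l) (Fin (a+l) → R)) :
            ExteriorAlgebra R (Fin (a + l) → R)) := by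
      rw [hF]
      simp only [LinearMap.coe_comp, Function.comp_apply, Submodule.coe_subtype]
      rw [hΨ y]
    set w : ExteriorAlgebra R (Fin (a + l) → R) :=
      (List.ofFn fun i : Fin l => ExteriorAlgebra.ι R (y i)).prod with hw
    have hchain := chainC_prod a πs u d hpv w
    have hzero : (ExteriorAlgebra.map β) (chainC πs
        ((List.ofFn fun i : Fin a => ExteriorAlgebra.ι R (u i)).prod * w) - d ^ a • w) = 0 :=
      hkill hchain
    rw [map_sub] at hzero
    have hsub := sub_eq_zero.mp hzero
    have hβprod : (ExteriorAlgebra.map β) w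
        = ((wedge R l (fun i => β (y i)) : ⋀[R]^l M) : ExteriorAlgebra R M) := by
      show _ = ExteriorAlgebra.ιMulti R l (fun i => β (y i))
      rw [ExteriorAlgebra.ιMulti_apply, hw, map_list_prod, List.map_ofFn]
      congr 1
      congr 1
      funext i
      exact ExteriorAlgebra.map_apply_ι β (y i)
    have hθ : Θ ((List.ofFn fun i : Fin a => ExteriorAlgebra.ι R (u i)).prod * w)
        = d ^ a • ((wedge R l (fun i => β (y i)) : ⋀[R]^l M) : ExteriorAlgebra R M) := by
      rw [hΘ]
      simp only [LinearMap.coe_comp, Function.comp_apply, AlgHom.toLinearMap_apply]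
      rw [hsub, map_smul, hβprod]
    rw [hFval, hval, hθ, hG]
    rfl
  -- conclude
  ext x
  rw [LinearMap.mem_ker]
  constructor
  · intro hx
    have hFx : F x = 0 := by
      rw [hF]
      simp only [LinearMap.coe_comp, Function.comp_apply, Submodule.coe_subtype]
      rw [hx]
      simp
    rw [hFG, hG] at hFx
    simp only [LinearMap.smul_apply, Submodule.coe_subtype] at hFx
    have hsm : (d ^ a • x : ⋀[R]^l M) = 0 := by
      apply Subtype.ext
      simpa using hFx
    rw [Submodule.mem_torsion_iff]
    exact ⟨⟨d ^ a, pow_mem hd a⟩, by rwa [Submonoid.smul_def]⟩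
  · intro hx
    obtain ⟨r, hr⟩ := (Submodule.mem_torsion_iff _).mp hx
    apply top_power_torsion_free (Ψ x) r.1 r.2
    rw [← LinearMap.map_smul, ← Submonoid.smul_def, hr, map_zero]
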